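/- Let m ≥ 1, let K be a finite index set of clusters, and for each k let Σ_k be a positive definite real m×m matrix, μ_k ∈ ℝ^m, and c_k > 0 a real number. Let x ∈ ℝ^m satisfy x ≠ μ_k for every k. For positive definite matrices S_k write Q_k(S) = (x − μ_k)ᵀ S_k^(−1) (x − μ_k). Then for any fixed k and j, the inequality log(Q_j(Σ)/Q_k(Σ)) ≥ (1/m)·log(det Σ_k / det Σ_j) holds if and only if log(Q_j(cΣ)/Q_k(cΣ)) ≥ (1/m)·log(det(c_k Σ_k) / det(c_j Σ_j)) holds, where (cΣ)_k = c_k Σ_k. Consequently, the FEMDA decision rule is unchanged when each dispersion matrix Σ_k is rescaled by an arbitrary positive factor c_k. -/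
import Mathlib


open Matrix

/-- FEMDA decision-rule scale invariance: rescaling each dispersion matrix `S k`
by an arbitrary positive factor `c k` leaves each decision inequality, hence the
whole decision rule, unchanged. -/
theorem femda_rule_scale_invariant
    (m : ℕ) (hm : 1 ≤ m) (K : Type*) [Fintype K]
    (S : K → Matrix (Fin m) (Fin m) ℝ) (hS : ∀ k, (S k).PosDef)
    (μ : K → (Fin m → ℝ)) (c : K → ℝ) (hc : ∀ k, 0 < c k)
    (x : Fin m → ℝ) (hx : ∀ k, x ≠ μ k) (k j : K) :
    (Real.log (((x - μ j) ⬝ᵥ ((S j)⁻¹ *ᵥ (x - μ j))) /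
          ((x - μ k) ⬝ᵥ ((S k)⁻¹ *ᵥ (x - μ k)))) ≥
        (1 / (m : ℝ)) * Real.log ((S k).det / (S j).det)) ↔
    (Real.log (((x - μ j) ⬝ᵥ ((c j • S j)⁻¹ *ᵥ (x - μ j))) /
          ((x - μ k) ⬝ᵥ ((c k • S k)⁻¹ *ᵥ (x - μ k)))) ≥
        (1 / (m : ℝ)) * Real.log ((c k • S k).det / (c j • S j).det)) := by
  have hm0 : (0:ℝ) < m := by exact_mod_cast hm
  -- Q positivity
  have hQ : ∀ i : K, 0 < (x - μ i) ⬝ᵥ ((S i)⁻¹ *ᵥ (x - μ i)) := by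
    intro i
    have hv : x - μ i ≠ 0 := sub_ne_zero.mpr (hx i)
    have := ((hS i).inv).re_dotProduct_pos hv
    simpa using this
  have hdet : ∀ i : K, 0 < (S i).det := fun i => (hS i).det_pos
  have hinv : ∀ i : K, (c i • S i)⁻¹ = (c i)⁻¹ • (S i)⁻¹ := by
    intro i
    apply Matrix.inv_eq_right_inv
    rw [smul_mul_smul_comm, Matrix.mul_nonsing_inv _ (isUnit_iff_ne_zero.mpr (hdet i).ne'),
      mul_inv_cancel₀ (hc i).ne', one_smul]
  have key : ∀ i : K, (x - μ i) ⬝ᵥ ((c i • S i)⁻¹ *ᵥ (x - μ i))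
      = (c i)⁻¹ * ((x - μ i) ⬝ᵥ ((S i)⁻¹ *ᵥ (x - μ i))) := by
    intro i
    rw [hinv, Matrix.smul_mulVec, dotProduct_smul, smul_eq_mul]
  rw [key, key, Matrix.det_smul, Matrix.det_smul]
  set Qj := (x - μ j) ⬝ᵥ ((S j)⁻¹ *ᵥ (x - μ j)) with hQj
  set Qk := (x - μ k) ⬝ᵥ ((S k)⁻¹ *ᵥ (x - μ k)) with hQk
  have hcj := hc j; have hck := hc k
  have e1 : Real.log ((c j)⁻¹ * Qj / ((c k)⁻¹ * Qk))
      = Real.log (Qj / Qk) + (Real.log (c k) - Real.log (c j)) := by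
    rw [Real.log_div (mul_ne_zero (inv_ne_zero hcj.ne') (hQ j).ne')
        (mul_ne_zero (inv_ne_zero hck.ne') (hQ k).ne'),
      Real.log_mul (inv_ne_zero hcj.ne') (hQ j).ne',
      Real.log_mul (inv_ne_zero hck.ne') (hQ k).ne',
      Real.log_inv, Real.log_inv, Real.log_div (hQ j).ne' (hQ k).ne']
    ring
  have e2 : (1 / (m : ℝ)) * Real.log ((c k) ^ Fintype.card (Fin m) * (S k).det /
        ((c j) ^ Fintype.card (Fin m) * (S j).det))
      = (1 / (m : ℝ)) * Real.log ((S k).det / (S j).det)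
        + (Real.log (c k) - Real.log (c j)) := by
    rw [Fintype.card_fin,
      Real.log_div (mul_ne_zero (pow_ne_zero _ hck.ne') (hdet k).ne')
        (mul_ne_zero (pow_ne_zero _ hcj.ne') (hdet j).ne'),
      Real.log_mul (pow_ne_zero _ hck.ne') (hdet k).ne',
      Real.log_mul (pow_ne_zero _ hcj.ne') (hdet j).ne',
      Real.log_pow, Real.log_pow, Real.log_div (hdet k).ne' (hdet j).ne']
    field_simp
    ring
  rw [e1, e2]
  constructor <;> intro h <;> linarith
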